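/- arXiv:2302.13937 — 2 statements merged into one kernel-verified Lean document; each statement's English description precedes it below -/
import Mathlib

section
/- Under the stated dynamic-consistency and constant-sum relations with both players making l moves, the game intelligences satisfy GI₁ = GI₂ + R₁ − R₂ − v₀ + v_T. -/
/-- Sequential two-person constant-sum game, both players making `l` moves.
`B i k` is machine `M_i`'s evaluation of the machine-optimal action at player
`i`'s `k`-th decision node, `A i k` its evaluation of the actual `k`-th action.
Under the dynamic-consistency/constant-sum relations
`A₁(k) + B₂(k) = c` (k = 1,…,l), `A₂(k) + B₁(k+1) = c` (k = 1,…,l−1),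
`v₀ = B₁(1)` and `A₂(l) = c − v_T`, the game intelligences
`GI_i = R_i − ∑_{k=1}^l (B_i(k) − A_i(k))` satisfy
`GI₁ = GI₂ + R₁ − R₂ − v₀ + v_T`. -/
theorem gi_dynamic_consistency_equal_moves
    (l : ℕ) (hl : 1 ≤ l) (c R1 R2 v0 vT : ℝ)
    (B1 A1 B2 A2 : ℕ → ℝ)
    (hconst : R1 + R2 = c)
    (h1 : ∀ k, 1 ≤ k → k ≤ l → A1 k + B2 k = c)
    (h2 : ∀ k, 1 ≤ k → k ≤ l - 1 → A2 k + B1 (k + 1) = c)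
    (hv0 : v0 = B1 1)
    (hvT : A2 l = c - vT) :
    R1 - (∑ k ∈ Finset.Icc 1 l, (B1 k - A1 k)) =
      (R2 - (∑ k ∈ Finset.Icc 1 l, (B2 k - A2 k))) + R1 - R2 - v0 + vT := by
  obtain ⟨m, rfl⟩ : ∃ m, l = m + 1 := ⟨l - 1, (Nat.succ_pred_eq_of_pos hl).symm⟩
  have hm : m + 1 - 1 = m := rfl
  have key : ∀ n, n ≤ m →
      ∑ k ∈ Finset.Icc 1 n, ((B1 k - A1 k) - (B2 k - A2 k)) = B1 1 - B1 (n + 1) := by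
    intro n hn
    induction n with
    | zero => simp
    | succ p ih =>
      rw [Finset.sum_Icc_succ_top (Nat.one_le_iff_ne_zero.mpr (Nat.succ_ne_zero p)),
        ih (Nat.le_of_succ_le hn)]
      have e1 := h1 (p + 1) (Nat.succ_le_succ (Nat.zero_le p))
        (Nat.le_trans hn (Nat.le_succ m))
      have e2 := h2 (p + 1) (Nat.succ_le_succ (Nat.zero_le p)) (hm ▸ hn)
      linarith
  have split : ∑ k ∈ Finset.Icc 1 (m + 1), ((B1 k - A1 k) - (B2 k - A2 k))
      = (∑ k ∈ Finset.Icc 1 m, ((B1 k - A1 k) - (B2 k - A2 k)))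
        + ((B1 (m + 1) - A1 (m + 1)) - (B2 (m + 1) - A2 (m + 1))) :=
    Finset.sum_Icc_succ_top (Nat.one_le_iff_ne_zero.mpr (Nat.succ_ne_zero m)) _
  have e1 := h1 (m + 1) (Nat.succ_le_succ (Nat.zero_le m)) le_rfl
  have hsub : ∑ k ∈ Finset.Icc 1 (m + 1), ((B1 k - A1 k) - (B2 k - A2 k))
      = (∑ k ∈ Finset.Icc 1 (m + 1), (B1 k - A1 k))
        - ∑ k ∈ Finset.Icc 1 (m + 1), (B2 k - A2 k) := Finset.sum_sub_distrib _ _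
  have := key m le_rfl
  rw [split, this] at hsub
  linarith
end

section
/- Under the stated dynamic-consistency and constant-sum relations with player 1 making l+1 moves and player 2 making l moves, the game intelligences satisfy GI₁ = GI₂ + R₁ − R₂ − v₀ + v_T, equivalently GI₁ = GI₂ + 2R₁ − c − v₀ + v_T. -/
lemma key_sum (l : ℕ) (hl : 1 ≤ l) (c : ℝ) (B1 A1 B2 A2 : ℕ → ℝ)
    (h1 : ∀ k, 1 ≤ k → k ≤ l → A1 k + B2 k = c)
    (h2 : ∀ k, 1 ≤ k → k ≤ l → A2 k + B1 (k + 1) = c) :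
    ∑ k ∈ Finset.Icc 1 (l + 1), (B1 k - A1 k) =
      (∑ k ∈ Finset.Icc 1 l, (B2 k - A2 k)) + B1 1 - A1 (l + 1) := by
  induction l with
  | zero => omega
  | succ n ih =>
    rcases Nat.eq_zero_or_pos n with h | h
    · subst h
      have h1' := h1 1 le_rfl (by omega)
      have h2' := h2 1 le_rfl (by omega)
      rw [show (0:ℕ)+1+1 = 2 from rfl, Finset.sum_Icc_succ_top (by omega : 1 ≤ 2),
        Finset.Icc_self, Finset.sum_singleton]
      simp only [Finset.sum_singleton]
      linarith
    · have hn : 1 ≤ n := h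
      rw [Finset.sum_Icc_succ_top (by omega : 1 ≤ n + 1 + 1),
        ih hn (fun k hk1 hk2 => h1 k hk1 (by omega))
          (fun k hk1 hk2 => h2 k hk1 (by omega)),
        Finset.sum_Icc_succ_top (by omega : 1 ≤ n + 1)]
      have h1' := h1 (n+1) (by omega) le_rfl
      have h2' := h2 (n+1) (by omega) le_rfl
      linarith

/-- Sequential two-person constant-sum game, player 1 making `l+1` moves and
player 2 making `l` moves, with player 1's last move leading to the terminal node.
Under the dynamic-consistency/constant-sum relations
`A₁(k) + B₂(k) = c` (k = 1,…,l), `A₂(k) + B₁(k+1) = c` (k = 1,…,l),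
`v₀ = B₁(1)` and `v_T = A₁(l+1)`, the game intelligences
`GI₁ = R₁ − ∑_{k=1}^{l+1} (B₁(k) − A₁(k))` and
`GI₂ = R₂ − ∑_{k=1}^{l} (B₂(k) − A₂(k))` satisfy
`GI₁ = GI₂ + R₁ − R₂ − v₀ + v_T`, equivalently
`GI₁ = GI₂ + 2R₁ − c − v₀ + v_T`. -/
theorem gi_dynamic_consistency_unequal_moves
    (l : ℕ) (hl : 1 ≤ l) (c R1 R2 v0 vT : ℝ)
    (B1 A1 B2 A2 : ℕ → ℝ)
    (hconst : R1 + R2 = c)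
    (h1 : ∀ k, 1 ≤ k → k ≤ l → A1 k + B2 k = c)
    (h2 : ∀ k, 1 ≤ k → k ≤ l → A2 k + B1 (k + 1) = c)
    (hv0 : v0 = B1 1)
    (hvT : vT = A1 (l + 1)) :
    R1 - (∑ k ∈ Finset.Icc 1 (l + 1), (B1 k - A1 k)) =
      (R2 - (∑ k ∈ Finset.Icc 1 l, (B2 k - A2 k))) + R1 - R2 - v0 + vT ∧
    R1 - (∑ k ∈ Finset.Icc 1 (l + 1), (B1 k - A1 k)) =
      (R2 - (∑ k ∈ Finset.Icc 1 l, (B2 k - A2 k))) + 2 * R1 - c - v0 + vT := by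
  have hk := key_sum l hl c B1 A1 B2 A2 h1 h2
  constructor <;> (rw [hk, hv0, hvT]; ring_nf) <;> linarith
end
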